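/- arXiv:2511.12840 — 2 statements merged into one kernel-verified Lean document; each statement's English description precedes it below -/
import Mathlib

section
/- Let u, v be nonzero vectors in ℝ^p and let ũ = (u,1), ṽ = (v,1) ∈ ℝ^{p+1}. Suppose |⟨u,v⟩|/(‖u‖‖v‖) ≤ ε for some ε ≥ 0, and let T ≥ max(1/‖u‖², 1/‖v‖²). Then |⟨ũ,ṽ⟩/(‖ũ‖‖ṽ‖)| ≤ ε + (2ε + 1)T. -/
noncomputable def append1 {p : ℕ} (u : EuclideanSpace ℝ (Fin p)) (t : ℝ) :
    WithLp 2 (EuclideanSpace ℝ (Fin p) × ℝ) :=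
  (WithLp.equiv 2 (EuclideanSpace ℝ (Fin p) × ℝ)).symm (u, t)

theorem stmt_3 (p : ℕ) (u v : EuclideanSpace ℝ (Fin p)) (hu : u ≠ 0) (hv : v ≠ 0)
    (ε T : ℝ) (hε : 0 ≤ ε)
    (hcorr : |inner ℝ u v| / (‖u‖ * ‖v‖) ≤ ε)
    (hT : max (1 / ‖u‖ ^ 2) (1 / ‖v‖ ^ 2) ≤ T) :
    |(inner ℝ (append1 u 1) (append1 v 1) : ℝ) / (‖append1 u 1‖ * ‖append1 v 1‖)| ≤
      ε + (2 * ε + 1) * T := by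
  have hu0 : (0:ℝ) < ‖u‖ := norm_pos_iff.2 hu
  have hv0 : (0:ℝ) < ‖v‖ := norm_pos_iff.2 hv
  have hinner : (inner ℝ (append1 u 1) (append1 v 1) : ℝ) = inner ℝ u v + 1 := by
    simp [append1, WithLp.prod_inner_apply]
  have hnu : ‖u‖ ≤ ‖append1 u 1‖ := by
    have h2 : ‖append1 u 1‖ ^ 2 = ‖u‖ ^ 2 + 1 := by
      simpa [append1] using WithLp.prod_norm_sq_eq_of_L2 (append1 u 1)
    nlinarith [norm_nonneg (append1 u 1)]
  have hnv : ‖v‖ ≤ ‖append1 v 1‖ := by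
    have h2 : ‖append1 v 1‖ ^ 2 = ‖v‖ ^ 2 + 1 := by
      simpa [append1] using WithLp.prod_norm_sq_eq_of_L2 (append1 v 1)
    nlinarith [norm_nonneg (append1 v 1)]
  have hnu0 : (0:ℝ) < ‖append1 u 1‖ := lt_of_lt_of_le hu0 hnu
  have hnv0 : (0:ℝ) < ‖append1 v 1‖ := lt_of_lt_of_le hv0 hnv
  have hden : (0:ℝ) < ‖append1 u 1‖ * ‖append1 v 1‖ := mul_pos hnu0 hnv0
  have hden' : (0:ℝ) < ‖u‖ * ‖v‖ := mul_pos hu0 hv0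
  have h1 : |(inner ℝ (append1 u 1) (append1 v 1) : ℝ)| ≤ |(inner ℝ u v : ℝ)| + 1 := by
    rw [hinner]; calc |(inner ℝ u v : ℝ) + 1| ≤ |(inner ℝ u v : ℝ)| + |(1:ℝ)| := abs_add_le _ _
      _ = |(inner ℝ u v : ℝ)| + 1 := by norm_num
  -- 1/(‖u‖‖v‖) ≤ T
  have hTuv : 1 / (‖u‖ * ‖v‖) ≤ T := by
    rcases le_total ‖u‖ ‖v‖ with h | h
    · refine le_trans ?_ (le_trans (le_max_left _ _) hT)
      rw [div_le_div_iff₀ hden' (by positivity)]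
      nlinarith
    · refine le_trans ?_ (le_trans (le_max_right _ _) hT)
      rw [div_le_div_iff₀ hden' (by positivity)]
      nlinarith
  have hT0 : 0 ≤ T := le_trans (by positivity) (le_trans (le_max_left _ _) hT)
  have habs : |(inner ℝ u v : ℝ)| ≤ ε * (‖u‖ * ‖v‖) := by
    have := (div_le_iff₀ hden').1 hcorr
    linarith
  calc |(inner ℝ (append1 u 1) (append1 v 1) : ℝ) / (‖append1 u 1‖ * ‖append1 v 1‖)|
      = |(inner ℝ (append1 u 1) (append1 v 1) : ℝ)| / (‖append1 u 1‖ * ‖append1 v 1‖) := by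
        rw [abs_div, abs_of_pos hden]
    _ ≤ (|(inner ℝ u v : ℝ)| + 1) / (‖u‖ * ‖v‖) := by
        exact div_le_div₀ (by positivity) h1 hden'
          (mul_le_mul hnu hnv (norm_nonneg v) (le_of_lt hnu0))
    _ = |(inner ℝ u v : ℝ)| / (‖u‖ * ‖v‖) + 1 / (‖u‖ * ‖v‖) := by ring
    _ ≤ ε + T := add_le_add hcorr hTuv
    _ ≤ ε + (2 * ε + 1) * T := by nlinarith
end

section
/- Let z₁,…,zₙ be nonzero vectors in ℝ^p with max_i 1/‖zᵢ‖² ≤ T, set z̃ᵢ = (zᵢ,1) ∈ ℝ^{p+1}, and let Ž, Ž̃ be the matrices of unit-normalized rows zᵢ/‖zᵢ‖, z̃ᵢ/‖z̃ᵢ‖. If ‖ŽŽᵀ − Iₙ‖ ≤ ε in operator norm (with ε ≥ 0), then ‖Ž̃Ž̃ᵀ − Iₙ‖ ≤ √(n(n−1))·(2ε+1)·T + ε. -/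
open scoped Matrix.Norms.L2Operator
section Aux
open Matrix

lemma euc_abs_le {n : ℕ} (v : EuclideanSpace ℝ (Fin n)) (i : Fin n) : |v i| ≤ ‖v‖ := by
  rw [EuclideanSpace.norm_eq]
  rw [← Real.sqrt_sq_eq_abs]
  apply Real.sqrt_le_sqrt
  have := Finset.single_le_sum (f := fun j => ‖v j‖ ^ 2) (fun j _ => sq_nonneg _)
    (Finset.mem_univ i)
  simpa [sq_abs] using this

lemma entry_le_l2_opNorm {n : ℕ} (A : Matrix (Fin n) (Fin n) ℝ) (i j : Fin n) :
    |A i j| ≤ ‖A‖ := by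
  have h := A.l2_opNorm_mulVec (EuclideanSpace.single j (1:ℝ))
  rw [EuclideanSpace.norm_single, norm_one, mul_one] at h
  refine le_trans ?_ h
  have h2 := euc_abs_le ((EuclideanSpace.equiv (Fin n) ℝ).symm
    (A *ᵥ (EuclideanSpace.single j (1:ℝ)))) i
  refine le_trans (le_of_eq ?_) h2
  have h3 : ((EuclideanSpace.equiv (Fin n) ℝ).symm
      (A *ᵥ (EuclideanSpace.single j (1:ℝ)))) i
      = (A *ᵥ (Pi.single j (1:ℝ))) i := rfl
  rw [h3, Matrix.mulVec_single]
  simp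

lemma l2_opNorm_le_sqrt {n : ℕ} (A : Matrix (Fin n) (Fin n) ℝ) :
    ‖A‖ ≤ Real.sqrt (∑ i, ∑ j, A i j ^ 2) := by
  have hdef := Matrix.l2_opNorm_def A
  set f : EuclideanSpace ℝ (Fin n) →L[ℝ] EuclideanSpace ℝ (Fin n) :=
    (Matrix.toEuclideanLin.trans LinearMap.toContinuousLinearMap) A with hf
  rw [hdef]
  refine ContinuousLinearMap.opNorm_le_bound f (Real.sqrt_nonneg _) fun x => ?_
  have hfx : ‖f x‖ = Real.sqrt (∑ i, (∑ j, A i j * x j) ^ 2) := by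
    have hx : (f x : EuclideanSpace ℝ (Fin n)) = Matrix.toEuclideanLin A x := rfl
    rw [hx, EuclideanSpace.norm_eq]
    congr 1
    refine Finset.sum_congr rfl fun i _ => ?_
    rw [Real.norm_eq_abs, sq_abs]
    show (A *ᵥ (WithLp.equiv 2 (Fin n → ℝ)) x) i ^ 2 = _
    simp [Matrix.mulVec, dotProduct]
  rw [hfx, EuclideanSpace.norm_eq]
  rw [← Real.sqrt_mul (by positivity)]
  apply Real.sqrt_le_sqrt
  calc ∑ i, (∑ j, A i j * x j) ^ 2 ≤ ∑ i, ((∑ j, A i j ^ 2) * ∑ j, x j ^ 2) :=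
        Finset.sum_le_sum fun i _ => Finset.sum_mul_sq_le_sq_mul_sq _ _ _
    _ = (∑ i, ∑ j, A i j ^ 2) * ∑ j, x j ^ 2 := by rw [Finset.sum_mul]
    _ = (∑ i, ∑ j, A i j ^ 2) * ∑ j, ‖x j‖ ^ 2 := by simp [sq_abs]
lemma key_bound (a b s ε T : ℝ) (ha : 0 < a) (hb : 0 < b) (hε : 0 ≤ ε)
    (hTa : 1 / a ^ 2 ≤ T) (hTb : 1 / b ^ 2 ≤ T) (hs : |s| ≤ ε * (a * b)) :
    |(s + 1) / (Real.sqrt (a ^ 2 + 1) * Real.sqrt (b ^ 2 + 1)) - s / (a * b)|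
      ≤ (2 * ε + 1) * T := by
  set A := Real.sqrt (a ^ 2 + 1) with hAdef
  set B := Real.sqrt (b ^ 2 + 1) with hBdef
  have hA2 : A ^ 2 = a ^ 2 + 1 := Real.sq_sqrt (by positivity)
  have hB2 : B ^ 2 = b ^ 2 + 1 := Real.sq_sqrt (by positivity)
  have hA : 0 < A := Real.sqrt_pos.2 (by positivity)
  have hB : 0 < B := Real.sqrt_pos.2 (by positivity)
  have haA : a ≤ A := by
    rw [hAdef]; nlinarith [Real.sq_sqrt (show (0:ℝ) ≤ a^2+1 by positivity),
      Real.sqrt_nonneg (a^2+1)]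
  have hbB : b ≤ B := by
    rw [hBdef]; nlinarith [Real.sq_sqrt (show (0:ℝ) ≤ b^2+1 by positivity),
      Real.sqrt_nonneg (b^2+1)]
  have hT : 0 < T := lt_of_lt_of_le (by positivity) hTa
  have hTa' : 1 ≤ T * a ^ 2 := by rw [div_le_iff₀ (by positivity)] at hTa; linarith
  have hTb' : 1 ≤ T * b ^ 2 := by rw [div_le_iff₀ (by positivity)] at hTb; linarith
  have habT : 1 ≤ T * (a * b) := by
    nlinarith [mul_pos ha hb, mul_pos hT (mul_pos ha hb), sq_nonneg (T*a*b - 1)]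
  have hab : 0 < a * b := mul_pos ha hb
  have hAB : 0 < A * B := mul_pos hA hB
  have habAB : a * b ≤ A * B := mul_le_mul haA hbB hb.le hA.le
  have key_eq : (s + 1) / (A * B) - s / (a * b)
      = (s * (a * b - A * B) + a * b) / ((a * b) * (A * B)) := by
    field_simp; ring
  rw [key_eq, abs_div, abs_of_pos (mul_pos hab hAB), div_le_iff₀ (mul_pos hab hAB)]
  have h1 : |s * (a * b - A * B)| ≤ ε * (a * b) * (A * B - a * b) := by
    have habs : |a * b - A * B| = A * B - a * b := by
      rw [abs_of_nonpos (by linarith)]; ring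
    rw [abs_mul, habs]
    exact mul_le_mul hs le_rfl (sub_nonneg.2 habAB) (by positivity)
  have hnum : |s * (a * b - A * B) + a * b| ≤ ε * (a * b) * (A * B - a * b) + a * b := by
    refine (abs_add_le _ _).trans ?_
    rw [abs_of_pos hab]; linarith
  refine hnum.trans ?_
  -- suffices: ε*(A*B - a*b) + 1 ≤ (2ε+1)*T*(A*B), then multiply by a*b
  have h2 : (A * B - a * b) * (A * B) ≤ 2 * T * (A * B) ^ 2 := by
    have e1 : (A * B - a * b) * (A * B) ≤ a ^ 2 + b ^ 2 + 1 := by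
      nlinarith [mul_nonneg (sub_nonneg.2 habAB) hab.le]
    have e2 : a ^ 2 + b ^ 2 + 1 ≤ 2 * T * ((a ^ 2 + 1) * (b ^ 2 + 1)) := by
      nlinarith [mul_le_mul_of_nonneg_right hTa' (show (0:ℝ) ≤ b^2+1 by positivity),
        mul_le_mul_of_nonneg_right hTb' (show (0:ℝ) ≤ a^2+1 by positivity)]
    calc (A * B - a * b) * (A * B) ≤ a ^ 2 + b ^ 2 + 1 := e1
      _ ≤ 2 * T * ((a ^ 2 + 1) * (b ^ 2 + 1)) := e2
      _ = 2 * T * (A * B) ^ 2 := by rw [mul_pow, hA2, hB2]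
  have h3 : A * B - a * b ≤ 2 * T * (A * B) := by
    have h2' : (A * B - a * b) * (A * B) ≤ (2 * T * (A * B)) * (A * B) := by
      rw [show (2 * T * (A * B)) * (A * B) = 2 * T * (A * B) ^ 2 by ring]
      exact h2
    exact le_of_mul_le_mul_right h2' hAB
  have h4 : ε * (A * B - a * b) + 1 ≤ (2 * ε + 1) * T * (A * B) := by
    have i1 : ε * (A * B - a * b) ≤ ε * (2 * T * (A * B)) :=
      mul_le_mul_of_nonneg_left h3 hε
    have i2 : 1 ≤ T * (A * B) := habT.trans (mul_le_mul_of_nonneg_left habAB hT.le)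
    have i3 : (2 * ε + 1) * T * (A * B) = ε * (2 * T * (A * B)) + T * (A * B) := by ring
    linarith
  calc ε * (a * b) * (A * B - a * b) + a * b
      = (ε * (A * B - a * b) + 1) * (a * b) := by ring
    _ ≤ ((2 * ε + 1) * T * (A * B)) * (a * b) := by
        apply mul_le_mul_of_nonneg_right h4 hab.le
    _ = (2 * ε + 1) * T * (a * b * (A * B)) := by ring

end Aux

/-- `G` is the normalized Gram matrix ŽŽᵀ and `G'` is Ž̃Ž̃ᵀ for the extended vectors.
`‖·‖` is the l2 operator (spectral) norm on matrices. -/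
theorem stmt_5 (n p : ℕ) (z : Fin n → EuclideanSpace ℝ (Fin p)) (hz : ∀ i, z i ≠ 0)
    (T ε : ℝ) (hε : 0 ≤ ε)
    (hT : ∀ i, 1 / ‖z i‖ ^ 2 ≤ T)
    (G G' : Matrix (Fin n) (Fin n) ℝ)
    (hG : ∀ i j, G i j = (inner ℝ (z i) (z j) : ℝ) / (‖z i‖ * ‖z j‖))
    (hG' : ∀ i j, G' i j =
      (inner ℝ (append1 (z i) 1) (append1 (z j) 1) : ℝ) / (‖append1 (z i) 1‖ * ‖append1 (z j) 1‖))
    (hE1 : ‖G - 1‖ ≤ ε) :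
    ‖G' - 1‖ ≤ Real.sqrt (n * (n - 1)) * (2 * ε + 1) * T + ε := by
  rcases Nat.eq_zero_or_pos n with hn | hn
  · subst hn
    have : G' - 1 = 0 := Subsingleton.elim _ _
    rw [this, norm_zero]
    have : ((0:ℕ):ℝ) * (((0:ℕ):ℝ) - 1) = 0 := by norm_num
    rw [this, Real.sqrt_zero]
    linarith
  have hzn : ∀ i, 0 < ‖z i‖ := fun i => norm_pos_iff.2 (hz i)
  have i0 : Fin n := ⟨0, hn⟩
  have hTpos : 0 < T := lt_of_lt_of_le (by have := hzn i0; positivity) (hT i0)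
  have hnorm1 : ∀ i, ‖append1 (z i) 1‖ = Real.sqrt (‖z i‖ ^ 2 + 1) := by
    intro i
    rw [← Real.sqrt_sq (norm_nonneg (append1 (z i) 1)), WithLp.prod_norm_sq_eq_of_L2]
    congr 1
    simp [append1]
  have hinner : ∀ i j, (inner ℝ (append1 (z i) 1) (append1 (z j) 1) : ℝ)
      = (inner ℝ (z i) (z j) : ℝ) + 1 := by
    intro i j
    rw [WithLp.prod_inner_apply]
    simp [append1]
  have hGd : ∀ i, G i i = 1 := by
    intro i
    rw [hG, real_inner_self_eq_norm_mul_norm, div_self (mul_pos (hzn i) (hzn i)).ne']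
  have hG'd : ∀ i, G' i i = 1 := by
    intro i
    rw [hG', hinner, hnorm1, real_inner_self_eq_norm_sq,
      Real.mul_self_sqrt (by positivity), div_self (by positivity)]
  have hoff : ∀ i j, i ≠ j → |(inner ℝ (z i) (z j) : ℝ)| ≤ ε * (‖z i‖ * ‖z j‖) := by
    intro i j hij
    have h := (entry_le_l2_opNorm (G - 1) i j).trans hE1
    rw [Matrix.sub_apply, Matrix.one_apply_ne hij, sub_zero, hG, abs_div,
      abs_of_pos (mul_pos (hzn i) (hzn j)), div_le_iff₀ (mul_pos (hzn i) (hzn j))] at h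
    linarith [h]
  have hPod : ∀ i j, i ≠ j → |(G' - G) i j| ≤ (2 * ε + 1) * T := by
    intro i j hij
    rw [Matrix.sub_apply, hG', hG, hinner, hnorm1 i, hnorm1 j]
    exact key_bound (‖z i‖) (‖z j‖) _ ε T (hzn i) (hzn j) hε (hT i) (hT j) (hoff i j hij)
  have hPd : ∀ i, (G' - G) i i = 0 := by
    intro i; rw [Matrix.sub_apply, hGd, hG'd, sub_self]
  set c : ℝ := (2 * ε + 1) * T with hc
  have hc0 : 0 ≤ c := by positivity
  have hnn : (0:ℝ) ≤ (n:ℝ) * ((n:ℝ) - 1) := by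
    have : (1:ℝ) ≤ (n:ℝ) := by exact_mod_cast hn
    nlinarith
  have hP : ‖G' - G‖ ≤ Real.sqrt ((n:ℝ) * ((n:ℝ) - 1)) * c := by
    refine (l2_opNorm_le_sqrt _).trans ?_
    rw [show Real.sqrt ((n:ℝ) * ((n:ℝ) - 1)) * c
        = Real.sqrt ((n:ℝ) * ((n:ℝ) - 1) * c ^ 2) by
      rw [Real.sqrt_mul hnn, Real.sqrt_sq hc0]]
    apply Real.sqrt_le_sqrt
    have inner_bound : ∀ i, ∑ j, ((G' - G) i j) ^ 2 ≤ ((n:ℝ) - 1) * c ^ 2 := by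
      intro i
      have step : ∀ j : Fin n, ((G' - G) i j) ^ 2
          ≤ c ^ 2 - (if j = i then c ^ 2 else 0) := by
        intro j
        by_cases hji : j = i
        · subst hji; rw [hPd j]; simp
        · simp only [hji, if_neg, if_false]
          have := hPod i j (fun h => hji h.symm)
          rw [← sq_abs]
          nlinarith [abs_nonneg ((G' - G) i j)]
      calc ∑ j, ((G' - G) i j) ^ 2
          ≤ ∑ j : Fin n, (c ^ 2 - if j = i then c ^ 2 else 0) :=
            Finset.sum_le_sum fun j _ => step j
        _ = (n:ℝ) * c ^ 2 - c ^ 2 := by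
            rw [Finset.sum_sub_distrib, Finset.sum_const, Finset.card_univ,
              Fintype.card_fin, Finset.sum_ite_eq' Finset.univ i (fun _ => c ^ 2),
              if_pos (Finset.mem_univ i), nsmul_eq_mul]
        _ = ((n:ℝ) - 1) * c ^ 2 := by ring
    calc ∑ i, ∑ j, ((G' - G) i j) ^ 2 ≤ ∑ _i : Fin n, ((n:ℝ) - 1) * c ^ 2 :=
          Finset.sum_le_sum fun i _ => inner_bound i
      _ = (n:ℝ) * (((n:ℝ) - 1) * c ^ 2) := by
          rw [Finset.sum_const, Finset.card_univ, Fintype.card_fin, nsmul_eq_mul]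
      _ = (n:ℝ) * ((n:ℝ) - 1) * c ^ 2 := by ring
  calc ‖G' - 1‖ = ‖(G' - G) + (G - 1)‖ := by rw [sub_add_sub_cancel]
    _ ≤ ‖G' - G‖ + ‖G - 1‖ := norm_add_le _ _
    _ ≤ Real.sqrt ((n:ℝ) * ((n:ℝ) - 1)) * c + ε := add_le_add hP hE1
    _ = Real.sqrt ((n:ℝ) * ((n:ℝ) - 1)) * (2 * ε + 1) * T + ε := by rw [hc]; ring
end
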